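/- Let d, e be positive integers with e ≥ d, g = d + e, and let δ_i be the unique integer with i·g ≤ δ_i·d < i·g + d. Suppose m, n are positive integers with h := m + n satisfying g·m > d·h (equivalently g/d > h/m). Then for all integers i > j ≥ 1 one has δ_i − δ_j + 1 > (i−j)·(h/m), and consequently (δ_i − δ_j)·m + j·h + m > i·h. -/

import Mathlib

theorem stmt_7 (d e : ℕ) (hd : 0 < d) (he : 0 < e) (hde : d ≤ e)
    (hcop : Nat.Coprime d e) (δ : ℕ → ℤ)
    (hδ : ∀ i : ℕ, (i : ℤ) * (d + e) ≤ δ i * d ∧ δ i * d < (i : ℤ) * (d + e) + d)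
    (m n : ℕ) (hm : 0 < m) (hn : 0 < n)
    (hslope : (d + e) * m > d * (m + n)) :
    ∀ i j : ℕ, 1 ≤ j → j < i →
      ((δ i : ℚ) - δ j + 1 > ((i : ℚ) - j) * ((m + n : ℚ) / m)) ∧
      (δ i - δ j) * (m : ℤ) + (j : ℤ) * (m + n) + m > (i : ℤ) * (m + n) := by
  intro i j hj hji
  have h1 := (hδ i).1
  have h2 := (hδ j).2
  have hij1 : (1 : ℤ) ≤ (i : ℤ) - j := by
    have : (j : ℤ) < i := by exact_mod_cast hji
    omega
  have hd' : (0 : ℤ) < d := by exact_mod_cast hd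
  have hm' : (0 : ℤ) < m := by exact_mod_cast hm
  have hG : ((d : ℤ) + e) * m > d * (m + n) := by exact_mod_cast hslope
  have key : (δ i - δ j + 1) * d > ((i : ℤ) - j) * (d + e) := by nlinarith
  have key2 : (δ i - δ j) * m + m > ((i : ℤ) - j) * (m + n) := by nlinarith
  constructor
  · have hmq : (0 : ℚ) < m := by exact_mod_cast hm
    rw [gt_iff_lt, ← sub_pos]
    have : ((δ i : ℚ) - δ j + 1 - ((i : ℚ) - j) * ((m + n : ℚ) / m))
        = (((δ i - δ j) * m + m - ((i : ℤ) - j) * (m + n) : ℤ) : ℚ) / m := by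
      push_cast
      field_simp
    rw [this]
    apply div_pos _ hmq
    exact_mod_cast sub_pos.mpr key2
  · linarith
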